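/- Let A be a definite n×n max-plus matrix and K ⊆ {1,...,n}. There exists an eigenvector x of A (with eigenvalue 0) whose support is exactly K (x_i ≠ -∞ iff i ∈ K) if and only if A_{ij} = -∞ for all i ∉ K and j ∈ K. -/

import Mathlib

namespace MaxPlus

/-- Max-plus (tropical) matrix product over `EReal` (`⊥ = -∞` is the max-plus zero,
`+` is the max-plus multiplication, `⊔`/`⨆` is the max-plus addition). -/
noncomputable def mmul {n : ℕ} (A B : Matrix (Fin n) (Fin n) EReal) : Matrix (Fin n) (Fin n) EReal :=
  fun i j => ⨆ k, A i k + B k j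

/-- The max-plus identity matrix. -/
noncomputable def mId (n : ℕ) : Matrix (Fin n) (Fin n) EReal := fun i j => if i = j then 0 else ⊥

/-- Max-plus matrix powers. -/
noncomputable def mpow {n : ℕ} (A : Matrix (Fin n) (Fin n) EReal) : ℕ → Matrix (Fin n) (Fin n) EReal
  | 0 => mId n
  | m + 1 => mmul (mpow A m) A

/-- The max-plus Kleene star `A* = I ⊕ A ⊕ A² ⊕ ⋯` (entrywise supremum of all powers). -/
noncomputable def mstar {n : ℕ} (A : Matrix (Fin n) (Fin n) EReal) : Matrix (Fin n) (Fin n) EReal :=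
  fun i j => ⨆ m, mpow A m i j

/-- Weight of the cycle determined by the list `l = [i₁,…,i_k]`,
namely `A i₁ i₂ + ⋯ + A i_k i₁`. -/
noncomputable def cycleWeight {n : ℕ} (A : Matrix (Fin n) (Fin n) EReal) (l : List (Fin n)) : EReal :=
  ((l.zip (l.rotate 1)).map fun p => A p.1 p.2).sum

/-- A nonempty list of pairwise distinct indices, representing an elementary cycle. -/
def IsCycle {n : ℕ} (l : List (Fin n)) : Prop := l ≠ [] ∧ l.Nodup

/-- All elementary cycles have nonpositive weight, i.e. the maximal cycle mean `λ(A) ≤ 0`. -/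
def CycleBound {n : ℕ} (A : Matrix (Fin n) (Fin n) EReal) : Prop :=
  ∀ l : List (Fin n), IsCycle l → cycleWeight A l ≤ 0

/-- A definite matrix: maximal cycle mean `0` and zero (max-plus unit) diagonal.
(The diagonal entries give cycles of weight `0`, so `λ(A) = 0` is equivalent to
`CycleBound A` here.) -/
def Definite {n : ℕ} (A : Matrix (Fin n) (Fin n) EReal) : Prop :=
  CycleBound A ∧ ∀ i, A i i = 0

/-- Max-plus action of a matrix on a vector: `(A ⊙ x)_i = max_j (A_{ij} + x_j)`. -/
noncomputable def mapVec {n : ℕ} (A : Matrix (Fin n) (Fin n) EReal) (x : Fin n → EReal) :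
    Fin n → EReal :=
  fun i => ⨆ j, A i j + x j

/-- The max-plus eigenspace of `A` for the eigenvalue `0`. -/
def eig {n : ℕ} (A : Matrix (Fin n) (Fin n) EReal) : Set (Fin n → EReal) :=
  {x | mapVec A x = x}

/-- The max-plus column span of a matrix. -/
def mspan {n : ℕ} (A : Matrix (Fin n) (Fin n) EReal) : Set (Fin n → EReal) :=
  {y | ∃ α : Fin n → EReal, y = fun i => ⨆ j, α j + A i j}

/-- For a definite matrix `A` and a nonempty index set `K`, there is an eigenvector
(for the eigenvalue `0`) with support exactly `K` iff `A_{ij} = -∞` for all `i ∉ K`,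
`j ∈ K`. -/
lemma my_add_iSup {ι : Sort*} (a : EReal) (f : ι → EReal) :
    a + ⨆ i, f i = ⨆ i, a + f i := by
  apply le_antisymm
  · induction a with
    | bot => simpa [EReal.bot_add] using bot_le
    | coe r =>
      rw [add_comm]
      refine (EReal.le_sub_iff_add_le (.inl (EReal.coe_ne_bot r))
        (.inl (EReal.coe_ne_top r))).1 (iSup_le fun i => ?_)
      refine (EReal.le_sub_iff_add_le (.inl (EReal.coe_ne_bot r))
        (.inl (EReal.coe_ne_top r))).2 ?_
      rw [add_comm]
      exact le_iSup (fun i => (r : EReal) + f i) i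
    | top =>
      rcases eq_or_ne (⨆ i, f i) ⊥ with h | h
      · simp [h, EReal.add_bot]
      · obtain ⟨i, hi⟩ : ∃ i, f i ≠ ⊥ := by
          by_contra hc
          push_neg at hc
          exact h (iSup_eq_bot.2 hc)
        calc (⊤ : EReal) + ⨆ i, f i ≤ ⊤ := le_top
          _ = ⊤ + f i := (EReal.top_add_of_ne_bot hi).symm
          _ ≤ ⨆ i, (⊤ : EReal) + f i := le_iSup (fun i => (⊤ : EReal) + f i) i
  · exact iSup_le fun i => add_le_add_right (le_iSup f i) a

lemma my_iSup_add {ι : Sort*} (a : EReal) (f : ι → EReal) :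
    (⨆ i, f i) + a = ⨆ i, f i + a := by
  rw [add_comm, my_add_iSup]
  exact iSup_congr fun i => add_comm _ _

lemma mmul_assoc {n : ℕ} (A B C : Matrix (Fin n) (Fin n) EReal) :
    mmul (mmul A B) C = mmul A (mmul B C) := by
  funext i j
  simp only [mmul]
  calc (⨆ k, (⨆ l, A i l + B l k) + C k j)
      = ⨆ k, ⨆ l, A i l + B l k + C k j :=
        iSup_congr fun k => my_iSup_add _ _
    _ = ⨆ l, ⨆ k, A i l + B l k + C k j := iSup_comm
    _ = ⨆ l, A i l + ⨆ k, B l k + C k j := by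
        refine iSup_congr fun l => ?_
        rw [my_add_iSup]
        exact iSup_congr fun k => add_assoc _ _ _

lemma mId_mmul {n : ℕ} (A : Matrix (Fin n) (Fin n) EReal) : mmul (mId n) A = A := by
  funext i j
  simp only [mmul, mId]
  apply le_antisymm
  · refine iSup_le fun k => ?_
    by_cases h : i = k
    · subst h; simp
    · simp [h, EReal.bot_add]
  · calc A i j = (if i = i then (0 : EReal) else ⊥) + A i j := by simp
      _ ≤ _ := le_iSup (fun k => (if i = k then (0 : EReal) else ⊥) + A k j) i

lemma mmul_mId {n : ℕ} (A : Matrix (Fin n) (Fin n) EReal) : mmul A (mId n) = A := by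
  funext i j
  simp only [mmul, mId]
  apply le_antisymm
  · refine iSup_le fun k => ?_
    by_cases h : k = j
    · subst h; simp
    · simp [h, EReal.add_bot]
  · calc A i j = A i j + (if j = j then (0 : EReal) else ⊥) := by simp
      _ ≤ _ := le_iSup (fun k => A i k + (if k = j then (0 : EReal) else ⊥)) j

lemma mpow_succ' {n : ℕ} (A : Matrix (Fin n) (Fin n) EReal) (m : ℕ) :
    mpow A (m + 1) = mmul A (mpow A m) := by
  induction m with
  | zero => show mmul (mId n) A = mmul A (mId n); rw [mId_mmul, mmul_mId]
  | succ m ih =>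
      show mmul (mpow A (m + 1)) A = mmul A (mmul (mpow A m) A)
      rw [ih, mmul_assoc]

lemma add_mpow_le_mstar {n : ℕ} (A : Matrix (Fin n) (Fin n) EReal) (m : ℕ) (i k j : Fin n) :
    A i k + mpow A m k j ≤ mstar A i j := by
  have h1 : A i k + mpow A m k j ≤ mpow A (m + 1) i j := by
    rw [mpow_succ']
    exact le_iSup (fun k => A i k + mpow A m k j) k
  exact h1.trans (le_iSup (fun m => mpow A m i j) (m + 1))

lemma mpow_bot {n : ℕ} (A : Matrix (Fin n) (Fin n) EReal) (K : Finset (Fin n))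
    (h : ∀ i ∉ K, ∀ j ∈ K, A i j = ⊥) (m : ℕ) :
    ∀ i ∉ K, ∀ j ∈ K, mpow A m i j = ⊥ := by
  induction m with
  | zero =>
      intro i hi j hj
      have : i ≠ j := fun e => hi (e ▸ hj)
      simp [mpow, mId, this]
  | succ m ih =>
      intro i hi j hj
      show (⨆ k, mpow A m i k + A k j) = ⊥
      refine iSup_eq_bot.2 fun k => ?_
      by_cases hk : k ∈ K
      · rw [ih i hi k hk, EReal.bot_add]
      · rw [h k hk j hj, EReal.add_bot]

theorem eigenvector_with_support_iff {n : ℕ} (A : Matrix (Fin n) (Fin n) EReal)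
    (hd : Definite A) (K : Finset (Fin n)) (hK : K.Nonempty) :
    (∃ x ∈ eig A, ∀ i, x i ≠ ⊥ ↔ i ∈ K) ↔
      ∀ i ∉ K, ∀ j ∈ K, A i j = ⊥ := by
  constructor
  · rintro ⟨x, hx, hs⟩ i hi j hj
    have hxi : x i = ⊥ := by
      by_contra h
      exact hi ((hs i).1 h)
    have heq : mapVec A x i = x i := congrFun hx i
    rw [hxi] at heq
    have hterm : A i j + x j = ⊥ :=
      iSup_eq_bot.1 heq j
    rcases EReal.add_eq_bot_iff.1 hterm with h | h
    · exact h
    · exact absurd h ((hs j).2 hj)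
  · intro hA
    set c : Fin n → EReal := fun j => if j ∈ K then (0 : EReal) else ⊥ with hc
    set x : Fin n → EReal := fun i => ⨆ j, c j + mstar A i j with hxdef
    have hstar_le : ∀ j ∈ K, ∀ i, mstar A i j ≤ x i := by
      intro j hj i
      have : c j + mstar A i j = mstar A i j := by
        simp [hc, hj]
      calc mstar A i j = c j + mstar A i j := this.symm
        _ ≤ x i := le_iSup (fun j => c j + mstar A i j) j
    have hpos : ∀ i ∈ K, (0 : EReal) ≤ x i := by
      intro i hi
      have h0 : (0 : EReal) ≤ mstar A i i := by
        have : mpow A 0 i i = 0 := by simp [mpow, mId]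
        calc (0 : EReal) = mpow A 0 i i := this.symm
          _ ≤ mstar A i i := le_iSup (fun m => mpow A m i i) 0
      exact h0.trans (hstar_le i hi i)
    refine ⟨x, ?_, ?_⟩
    · -- eigenvector
      funext i
      apply le_antisymm
      · refine iSup_le fun k => ?_
        have hxk : A i k + x k = ⨆ j, A i k + (c j + mstar A k j) := my_add_iSup _ _
        rw [hxk]
        refine iSup_le fun j => ?_
        have h1 : A i k + (c j + mstar A k j) = c j + (A i k + mstar A k j) := by
          rw [add_left_comm]
        rw [h1]
        have h2 : A i k + mstar A k j ≤ mstar A i j := by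
          rw [show mstar A k j = ⨆ m, mpow A m k j from rfl, my_add_iSup]
          exact iSup_le fun m => add_mpow_le_mstar A m i k j
        calc c j + (A i k + mstar A k j) ≤ c j + mstar A i j := add_le_add_right h2 _
          _ ≤ x i := le_iSup (fun j => c j + mstar A i j) j
      · refine iSup_le fun j => ?_
        by_cases hj : j ∈ K
        · have h0 : c j + mstar A i j = mstar A i j := by simp [hc, hj]
          rw [h0]
          refine iSup_le fun m => ?_
          match m with
          | 0 =>
            by_cases hij : i = j
            · subst hij
              have : mpow A 0 i i = 0 := by simp [mpow, mId]
              rw [this]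
              calc (0 : EReal) ≤ x i := hpos i hj
                _ = 0 + x i := (zero_add _).symm
                _ = A i i + x i := by rw [hd.2 i]
                _ ≤ ⨆ k, A i k + x k := le_iSup (fun k => A i k + x k) i
            · have : mpow A 0 i j = ⊥ := by simp [mpow, mId, hij]
              rw [this]; exact bot_le
          | m + 1 =>
            rw [mpow_succ']
            refine iSup_le fun k => ?_
            have h1 : mpow A m k j ≤ x k :=
              (le_iSup (fun m => mpow A m k j) m).trans (hstar_le j hj k)
            calc A i k + mpow A m k j ≤ A i k + x k := add_le_add_right h1 _
              _ ≤ ⨆ k, A i k + x k := le_iSup (fun k => A i k + x k) k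
        · have h0 : c j + mstar A i j = ⊥ := by simp [hc, hj, EReal.bot_add]
          rw [h0]; exact bot_le
    · -- support
      intro i
      constructor
      · intro h
        by_contra hi
        apply h
        refine iSup_eq_bot.2 fun j => ?_
        by_cases hj : j ∈ K
        · have : mstar A i j = ⊥ :=
            iSup_eq_bot.2 fun m => mpow_bot A K hA m i hi j hj
          rw [this, EReal.add_bot]
        · simp [hc, hj, EReal.bot_add]
      · intro hi
        have : (0 : EReal) ≤ x i := hpos i hi
        intro h
        rw [h] at this
        exact absurd (le_bot_iff.1 this) (by simp)


end MaxPlus
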